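/- Suppose in addition that K has characteristic p for a prime number p. Then the p-th iterated matrix (the p-curvature) of the Okubo system Y' = CY is given by C_p = (t·1 − T)^{-1}(B + 1) · (t·1 − T)^{-1}(B + 2) · ⋯ · (t·1 − T)^{-1}(B + (p−1)) · (t·1 − T)^{-1}B, i.e. C_p is the product, from left to right over j = 1 up to j = p−1, of the factors (t·1 − T)^{-1}(B + j·1), followed by the rightmost factor (t·1 − T)^{-1}B. -/

import Mathlib

/-- The iterated matrices of the system `Y' = C Y`: `iterMat d C 0 = C₁ = C` and
`iterMat d C m = C_{m+1} = ∂(C_m) + C_m · C`, where `∂ = d` is applied entrywise. -/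
def iterMat {K : Type*} [Field K] {ι : Type*} [Fintype ι] [DecidableEq ι]
    (d : K → K) (C : Matrix ι ι K) : ℕ → Matrix ι ι K
  | 0 => C
  | m + 1 => (iterMat d C m).map d + iterMat d C m * C

section aux

variable {K : Type*} [Field K] (d : K → K)

lemma okubo_d_zero (hd_add : ∀ a b : K, d (a + b) = d a + d b) : d 0 = 0 := by
  have h := hd_add 0 0
  simp only [add_zero] at h
  exact (add_eq_left.mp h.symm)

lemma okubo_d_one (hd_mul : ∀ a b : K, d (a * b) = a * d b + d a * b) : d 1 = 0 := by
  have h := hd_mul 1 1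
  simp only [one_mul, mul_one] at h
  exact (add_eq_left.mp h.symm)

lemma okubo_d_neg (hd_add : ∀ a b : K, d (a + b) = d a + d b) (x : K) : d (-x) = -d x := by
  have h := hd_add x (-x)
  rw [add_neg_cancel, okubo_d_zero d hd_add] at h
  linear_combination -h

lemma okubo_d_sub (hd_add : ∀ a b : K, d (a + b) = d a + d b) (x y : K) :
    d (x - y) = d x - d y := by
  rw [sub_eq_add_neg, hd_add, okubo_d_neg d hd_add, sub_eq_add_neg]

lemma okubo_d_nat (hd_add : ∀ a b : K, d (a + b) = d a + d b)
    (hd_mul : ∀ a b : K, d (a * b) = a * d b + d a * b) (m : ℕ) : d (m : K) = 0 := by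
  induction m with
  | zero => simpa using okubo_d_zero d hd_add
  | succ k ih =>
    push_cast
    rw [hd_add, ih, okubo_d_one d hd_mul, add_zero]

lemma okubo_d_inv (hd_add : ∀ a b : K, d (a + b) = d a + d b)
    (hd_mul : ∀ a b : K, d (a * b) = a * d b + d a * b)
    (x : K) (hx : x ≠ 0) (hdx : d x = 1) :
    d x⁻¹ = -(x⁻¹ * x⁻¹) := by
  have h : x * x⁻¹ = 1 := mul_inv_cancel₀ hx
  have h2 := hd_mul x x⁻¹
  rw [h, okubo_d_one d hd_mul, hdx, one_mul] at h2
  have h3 : x * d x⁻¹ = -x⁻¹ := by linear_combination -h2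
  have h4 := congrArg (fun y => x⁻¹ * y) h3
  rw [← mul_assoc, inv_mul_cancel₀ hx, one_mul] at h4
  rw [h4]; ring

variable {n : ℕ}

lemma okubo_map_mul (hd_add : ∀ a b : K, d (a + b) = d a + d b)
    (hd_mul : ∀ a b : K, d (a * b) = a * d b + d a * b)
    (X Y : Matrix (Fin n) (Fin n) K) :
    (X * Y).map d = X.map d * Y + X * Y.map d := by
  ext a b
  simp only [Matrix.map_apply, Matrix.mul_apply, Matrix.add_apply]
  rw [show d (∑ k, X a k * Y k b) = ∑ k, d (X a k * Y k b) from
    map_sum (AddMonoidHom.mk' d hd_add) _ _, ← Finset.sum_add_distrib]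
  refine Finset.sum_congr rfl fun k _ => ?_
  rw [hd_mul]; ring

lemma okubo_map_const {X : Matrix (Fin n) (Fin n) K} (hX : ∀ a b, d (X a b) = 0) :
    X.map d = 0 := by
  ext a b; simpa using hX a b

end aux

section main

variable {K : Type*} [Field K] {n : ℕ}

lemma okubo_A_eq (t : K) (ts : Fin n → K) :
    t • (1 : Matrix (Fin n) (Fin n) K) - Matrix.diagonal ts
      = Matrix.diagonal (fun i => t - ts i) := by
  ext i j
  by_cases h : i = j <;>
    simp [Matrix.diagonal_apply, Matrix.one_apply, Matrix.sub_apply, h]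

lemma okubo_Ainv_eq (t : K) (ts : Fin n → K) (htne : ∀ i, t ≠ ts i) :
    (t • (1 : Matrix (Fin n) (Fin n) K) - Matrix.diagonal ts)⁻¹
      = Matrix.diagonal (fun i => (t - ts i)⁻¹) := by
  rw [okubo_A_eq]
  refine Matrix.inv_eq_right_inv ?_
  rw [Matrix.diagonal_mul_diagonal]
  have h : (fun i => (t - ts i) * (t - ts i)⁻¹) = fun _ => (1 : K) := by
    funext i
    exact mul_inv_cancel₀ (sub_ne_zero.mpr (htne i))
  rw [h, Matrix.diagonal_one]

lemma okubo_step
    (d : K → K) (hd_add : ∀ a b : K, d (a + b) = d a + d b)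
    (hd_mul : ∀ a b : K, d (a * b) = a * d b + d a * b)
    (t : K) (ht : d t = 1)
    (ts : Fin n → K) (hts : ∀ i, d (ts i) = 0) (htne : ∀ i, t ≠ ts i)
    (B : Matrix (Fin n) (Fin n) K) (hB : ∀ a b, d (B a b) = 0) (m : ℕ) :
    iterMat d ((t • (1 : Matrix (Fin n) (Fin n) K) - Matrix.diagonal ts)⁻¹ * B) (m + 1)
      = (t • (1 : Matrix (Fin n) (Fin n) K) - Matrix.diagonal ts)⁻¹ *
          (B - ((m : K) + 1) • (1 : Matrix (Fin n) (Fin n) K)) *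
          iterMat d ((t • (1 : Matrix (Fin n) (Fin n) K) - Matrix.diagonal ts)⁻¹ * B) m := by
  rw [okubo_Ainv_eq t ts htne]
  set Ainv : Matrix (Fin n) (Fin n) K := Matrix.diagonal (fun i => (t - ts i)⁻¹) with hAinv_def
  -- derivative of Ainv
  have hmapAinv : Ainv.map d = -(Ainv * Ainv) := by
    rw [hAinv_def, Matrix.diagonal_map (okubo_d_zero d hd_add),
      Matrix.diagonal_mul_diagonal]
    ext i j
    by_cases h : i = j
    · subst h
      simp only [Matrix.diagonal_apply_eq, Matrix.neg_apply]
      have hd1 : d (t - ts i) = 1 := by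
        rw [okubo_d_sub d hd_add, ht, hts, sub_zero]
      have hx : t - ts i ≠ 0 := sub_ne_zero.mpr (htne i)
      rw [okubo_d_inv d hd_add hd_mul (t - ts i) hx hd1]
    · simp [Matrix.diagonal_apply_ne _ h, h]
  -- constant matrices have zero derivative
  have hconst : ∀ (c : ℕ),
      (B - ((c : K) + 1) • (1 : Matrix (Fin n) (Fin n) K)).map d = 0 := by
    intro c
    refine okubo_map_const d ?_
    intro a b
    have h1 : d (((c : K) + 1) * (1 : Matrix (Fin n) (Fin n) K) a b) = 0 := by
      by_cases h : a = b <;>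
        simp [Matrix.one_apply, h, okubo_d_zero d hd_add, hd_mul, hd_add,
          okubo_d_one d hd_mul, okubo_d_nat d hd_add hd_mul]
    simp only [Matrix.sub_apply, Matrix.smul_apply, smul_eq_mul]
    rw [okubo_d_sub d hd_add, hB, h1, sub_zero]
  have hBmap : B.map d = 0 := okubo_map_const d hB
  induction m with
  | zero =>
    show (Ainv * B).map d + Ainv * B * (Ainv * B)
      = Ainv * (B - (((0 : ℕ) : K) + 1) • 1) * (Ainv * B)
    rw [okubo_map_mul d hd_add hd_mul]
    rw [hBmap, mul_zero, add_zero, hmapAinv]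
    rw [show (((0 : ℕ) : K) + 1) = (1 : K) by norm_num, one_smul]
    noncomm_ring
  | succ m ih =>
    set Z := iterMat d (Ainv * B) m with hZ
    set E : Matrix (Fin n) (Fin n) K := B - ((m : K) + 1) • 1 with hE
    have hE2 : B - ((((m : ℕ) + 1 : ℕ) : K) + 1) • (1 : Matrix (Fin n) (Fin n) K)
        = E - 1 := by
      rw [hE]
      push_cast
      rw [show ((m : K) + 1 + 1) • (1 : Matrix (Fin n) (Fin n) K)
        = ((m : K) + 1) • (1 : Matrix (Fin n) (Fin n) K) + 1 by rw [add_smul, one_smul]]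
      abel
    rw [hE2]
    have key : iterMat d (Ainv * B) (m + 1) = Ainv * E * Z := ih
    have hdefn : iterMat d (Ainv * B) (m + 1 + 1)
        = (iterMat d (Ainv * B) (m + 1)).map d
          + iterMat d (Ainv * B) (m + 1) * (Ainv * B) := rfl
    have hZmap : Z.map d = Ainv * E * Z - Z * (Ainv * B) := by
      have hd2 : Z.map d + Z * (Ainv * B) = Ainv * E * Z := key
      exact eq_sub_of_add_eq hd2
    rw [hdefn, key, okubo_map_mul d hd_add hd_mul (Ainv * E) Z,
      okubo_map_mul d hd_add hd_mul Ainv E, hE, hconst m, ← hE, hmapAinv,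
      mul_zero, add_zero, hZmap]
    noncomm_ring

lemma okubo_prod
    (d : K → K) (hd_add : ∀ a b : K, d (a + b) = d a + d b)
    (hd_mul : ∀ a b : K, d (a * b) = a * d b + d a * b)
    (t : K) (ht : d t = 1)
    (ts : Fin n → K) (hts : ∀ i, d (ts i) = 0) (htne : ∀ i, t ≠ ts i)
    (B : Matrix (Fin n) (Fin n) K) (hB : ∀ a b, d (B a b) = 0) (m : ℕ) :
    iterMat d ((t • (1 : Matrix (Fin n) (Fin n) K) - Matrix.diagonal ts)⁻¹ * B) m
      = (((List.range m).reverse.map (fun j : ℕ =>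
          (t • (1 : Matrix (Fin n) (Fin n) K) - Matrix.diagonal ts)⁻¹ *
            (B - ((j : K) + 1) • (1 : Matrix (Fin n) (Fin n) K)))).prod) *
        ((t • (1 : Matrix (Fin n) (Fin n) K) - Matrix.diagonal ts)⁻¹ * B) := by
  induction m with
  | zero => simp [iterMat]
  | succ m ih =>
    rw [okubo_step d hd_add hd_mul t ht ts hts htne B hB m, ih,
      List.range_succ, List.reverse_append]
    simp only [List.reverse_cons, List.reverse_nil, List.nil_append, List.map_cons,
      List.prod_cons, List.singleton_append]
    rw [← mul_assoc]

end main

/-- In characteristic `p`, the `p`-curvature of the Okubo system `Y' = (t·1-T)⁻¹ B Y` is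
`C_p = (t·1-T)⁻¹(B+1) · (t·1-T)⁻¹(B+2) ⋯ (t·1-T)⁻¹(B+(p-1)) · (t·1-T)⁻¹ B`. -/
theorem okubo_pCurvature_closed_formula
    {K : Type*} [Field K] {p : ℕ} (hp : p.Prime) [CharP K p]
    (d : K → K) (hd_add : ∀ a b : K, d (a + b) = d a + d b)
    (hd_mul : ∀ a b : K, d (a * b) = a * d b + d a * b)
    {n : ℕ} (t : K) (ht : d t = 1)
    (ts : Fin n → K) (hts : ∀ i, d (ts i) = 0) (htne : ∀ i, t ≠ ts i)
    (B : Matrix (Fin n) (Fin n) K) (hB : ∀ a b, d (B a b) = 0) :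
    iterMat d ((t • (1 : Matrix (Fin n) (Fin n) K) - Matrix.diagonal ts)⁻¹ * B) (p - 1) =
      (((List.range (p - 1)).map (fun j : ℕ =>
        (t • (1 : Matrix (Fin n) (Fin n) K) - Matrix.diagonal ts)⁻¹ *
          (B + ((j : K) + 1) • (1 : Matrix (Fin n) (Fin n) K)))).prod) *
        ((t • (1 : Matrix (Fin n) (Fin n) K) - Matrix.diagonal ts)⁻¹ * B) := by
  rw [okubo_prod d hd_add hd_mul t ht ts hts htne B hB (p - 1)]
  congr 1
  congr 1
  -- rewrite the reversed range as a mapped range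
  rw [List.range_eq_range', List.reverse_range', List.map_map, ← List.range_eq_range']
  refine List.map_congr_left fun k hk => ?_
  rw [List.mem_range] at hk
  have hp2 : 2 ≤ p := hp.two_le
  have hk' : k ≤ p - 2 := by omega
  have harith : 0 + (p - 1) - 1 - k = p - 2 - k := by omega
  simp only [Function.comp_apply, harith]
  congr 1
  have hcast : ((p - 2 - k : ℕ) : K) = (p : K) - 2 - k := by
    have h1 : ((p - 2 - k : ℕ) : K) = ((p - 2 : ℕ) : K) - (k : K) := by
      rw [Nat.cast_sub hk']
    have h2 : ((p - 2 : ℕ) : K) = (p : K) - 2 := by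
      rw [Nat.cast_sub hp2]; norm_num
    rw [h1, h2]
  have hpK : (p : K) = 0 := CharP.cast_eq_zero K p
  rw [sub_eq_add_neg (b := (((p - 2 - k : ℕ) : K) + 1) • (1 : Matrix (Fin n) (Fin n) K)),
    ← neg_smul]
  congr 2
  rw [hcast, hpK]
  ring
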